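/- arXiv:2501.16522 — 2 statements merged into one kernel-verified Lean document; each statement's English description precedes it below -/
import Mathlib

section
/- Define h(x,y) = x^{-N}, f₁(x,y) = r₀x^N/(1+Ky) - ax² - pxy - dx, f₂(x,y) = qxy - my for x, y > 0 with 1 < N < 2 and all parameters positive. Then ∂/∂x(h·f₁) + ∂/∂y(h·f₂) ≥ [q - a(2-N)]x^{1-N} + [d(N-1) - m]x^{-N} for all x, y > 0. -/
theorem stmt_13 (r₀ K a d p q m N : ℝ) (hr : 0 < r₀) (hK : 0 < K)
    (ha : 0 < a) (hd : 0 < d) (hp : 0 < p) (hq : 0 < q) (hm : 0 < m)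
    (hN1 : 1 < N) (hN2 : N < 2) :
    ∀ x y : ℝ, 0 < x → 0 < y →
      deriv (fun x' : ℝ => x' ^ (-N) *
          (r₀ * x' ^ N / (1 + K * y) - a * x' ^ 2 - p * x' * y - d * x')) x
        + deriv (fun y' : ℝ => x ^ (-N) * (q * x * y' - m * y')) y
      ≥ (q - a * (2 - N)) * x ^ (1 - N) + (d * (N - 1) - m) * x ^ (-N) := by
  intro x y hx hy
  -- rewrite the first function on a neighborhood of x
  have hev : (fun x' : ℝ => x' ^ (-N) *
      (r₀ * x' ^ N / (1 + K * y) - a * x' ^ 2 - p * x' * y - d * x'))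
      =ᶠ[nhds x] (fun x' : ℝ =>
        r₀ / (1 + K * y) - a * x' ^ (2 - N) - p * y * x' ^ (1 - N)
          - d * x' ^ (1 - N)) := by
    filter_upwards [eventually_gt_nhds hx] with x' hx'
    have h0 : x' ≠ 0 := ne_of_gt hx'
    have h2 : (x' : ℝ) ^ 2 = x' ^ (2 : ℝ) := by
      rw [← Real.rpow_natCast x' 2]; norm_num
    have hmulN : x' ^ (-N) * x' ^ N = 1 := by
      rw [← Real.rpow_add hx']; simp
    have hmul2 : x' ^ (-N) * x' ^ (2 : ℝ) = x' ^ (2 - N) := by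
      rw [← Real.rpow_add hx']; ring_nf
    have hmul1 : x' ^ (-N) * x' = x' ^ (1 - N) := by
      nth_rewrite 2 [← Real.rpow_one x']
      rw [← Real.rpow_add hx']; ring_nf
    have expand : x' ^ (-N) * (r₀ * x' ^ N / (1 + K * y) - a * x' ^ 2
        - p * x' * y - d * x')
        = r₀ * (x' ^ (-N) * x' ^ N) / (1 + K * y) - a * (x' ^ (-N) * x' ^ (2:ℝ))
          - p * y * (x' ^ (-N) * x') - d * (x' ^ (-N) * x') := by
      rw [h2]; ring
    rw [expand, hmulN, hmul2, hmul1]; ring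
  rw [hev.deriv_eq]
  -- first derivative
  have d1 : HasDerivAt (fun x' : ℝ =>
      r₀ / (1 + K * y) - a * x' ^ (2 - N) - p * y * x' ^ (1 - N)
        - d * x' ^ (1 - N))
      (0 - a * ((2 - N) * x ^ (2 - N - 1)) - p * y * ((1 - N) * x ^ (1 - N - 1))
        - d * ((1 - N) * x ^ (1 - N - 1))) x := by
    have h1 := Real.hasDerivAt_rpow_const (p := 2 - N) (Or.inl (ne_of_gt hx))
    have h2 := Real.hasDerivAt_rpow_const (p := 1 - N) (Or.inl (ne_of_gt hx))
    exact (((hasDerivAt_const x (r₀ / (1 + K * y))).sub (h1.const_mul a)).sub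
      (h2.const_mul (p * y))).sub (h2.const_mul d)
  rw [d1.deriv]
  -- second derivative
  have d2 : HasDerivAt (fun y' : ℝ => x ^ (-N) * (q * x * y' - m * y'))
      (x ^ (-N) * (q * x - m)) y := by
    have : HasDerivAt (fun y' : ℝ => q * x * y' - m * y') (q * x - m) y := by
      have h := ((hasDerivAt_id y).const_mul (q * x)).sub
        ((hasDerivAt_id y).const_mul m)
      simp only [id, mul_one] at h
      exact h
    exact this.const_mul _
  rw [d2.deriv]
  -- algebra
  have e1 : x ^ (2 - N - 1) = x ^ (1 - N) := by ring_nf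
  have e2 : x ^ (1 - N - 1) = x ^ (-N) := by ring_nf
  have e3 : x ^ (-N) * x = x ^ (1 - N) := by
    nth_rewrite 2 [← Real.rpow_one x]
    rw [← Real.rpow_add hx]; ring_nf
  have hxN : (0:ℝ) < x ^ (-N) := Real.rpow_pos_of_pos hx _
  have key : 0 ≤ p * y * (N - 1) * x ^ (-N) := by
    have := sub_pos.mpr hN1
    positivity
  have : x ^ (-N) * (q * x - m) = q * x ^ (1 - N) - m * x ^ (-N) := by
    rw [mul_sub, mul_comm q x, ← mul_assoc, e3]; ring
  rw [e1, e2, this]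
  nlinarith [key]
end

section
/- Let J be the 2×2 matrix with entries J₁₁ = Na₀ - (1+v̄)(2a₁ + a₂ + a₃v̄), J₁₂ = -a₃ - (a₁+a₂) - 2a₃v̄, J₂₁ = v̄(1+v̄), J₂₂ = 0, where a₀, a₁, a₂, a₃, v̄ > 0 and a₀ = (a₁+a₂+a₃v̄)(1+v̄). Then trace(J) = 0 if and only if N = 1 + a₁/(a₁ + a₂ + a₃v̄), and det(J) = (a₃ + a₁ + a₂ + 2a₃v̄)·v̄(1+v̄) > 0; consequently at N = N_H := 1 + a₁/(a₁+a₂+a₃v̄) both eigenvalues of J are purely imaginary and nonzero. -/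
theorem stmt_16 (a₀ a₁ a₂ a₃ vbar N : ℝ) (h₀ : 0 < a₀) (h₁ : 0 < a₁)
    (h₂ : 0 < a₂) (h₃ : 0 < a₃) (hvbar : 0 < vbar)
    (heq : a₀ = (a₁ + a₂ + a₃ * vbar) * (1 + vbar)) :
    let J : Matrix (Fin 2) (Fin 2) ℝ :=
      !![N * a₀ - (1 + vbar) * (2 * a₁ + a₂ + a₃ * vbar),
         -a₃ - (a₁ + a₂) - 2 * a₃ * vbar;
         vbar * (1 + vbar), 0]
    (J.trace = 0 ↔ N = 1 + a₁ / (a₁ + a₂ + a₃ * vbar)) ∧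
    J.det = (a₃ + a₁ + a₂ + 2 * a₃ * vbar) * (vbar * (1 + vbar)) ∧
    0 < J.det ∧
    (N = 1 + a₁ / (a₁ + a₂ + a₃ * vbar) →
      ∀ μ : ℂ, μ ∈ spectrum ℂ (J.map (Complex.ofReal ·)) →
        μ.re = 0 ∧ μ ≠ 0) := by
  intro J
  have hs : 0 < a₁ + a₂ + a₃ * vbar := by positivity
  have h1v : 0 < 1 + vbar := by linarith
  have htr : J.trace = N * a₀ - (1 + vbar) * (2 * a₁ + a₂ + a₃ * vbar) := by
    simp [J, Matrix.trace_fin_two]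
  have hdet : J.det = (a₃ + a₁ + a₂ + 2 * a₃ * vbar) * (vbar * (1 + vbar)) := by
    simp [J, Matrix.det_fin_two]; ring
  have hdpos : 0 < J.det := by rw [hdet]; positivity
  refine ⟨?_, hdet, hdpos, ?_⟩
  · rw [htr, heq]
    constructor
    · intro h
      have h1v' : (1 + vbar) ≠ 0 := ne_of_gt h1v
      field_simp
      nlinarith [h]
    · intro h
      rw [h]
      field_simp
      ring
  · intro hN μ hμ
    -- trace is zero, so J 0 0 = 0
    have hJ00 : N * a₀ - (1 + vbar) * (2 * a₁ + a₂ + a₃ * vbar) = 0 := by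
      rw [hN, heq]; field_simp; ring
    rw [spectrum.mem_iff] at hμ
    rw [Matrix.isUnit_iff_isUnit_det] at hμ
    have hdet0 : (((algebraMap ℂ (Matrix (Fin 2) (Fin 2) ℂ)) μ -
        J.map (Complex.ofReal ·)).det) = 0 := by
      by_contra h
      exact hμ (isUnit_iff_ne_zero.mpr h)
    set d : ℝ := (a₃ + a₁ + a₂ + 2 * a₃ * vbar) * (vbar * (1 + vbar)) with hd
    have hdpos' : 0 < d := by positivity
    have key : μ ^ 2 = -(d : ℂ) := by
      have : ((algebraMap ℂ (Matrix (Fin 2) (Fin 2) ℂ)) μ -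
          J.map (Complex.ofReal ·)).det =
          μ ^ 2 + (d : ℂ) := by
        rw [hd]
        simp [J, Matrix.det_fin_two, Matrix.algebraMap_eq_diagonal,
          Matrix.diagonal, Matrix.map]
        push_cast
        rw [show ((N:ℂ) * a₀ - (1 + vbar) * (2 * a₁ + a₂ + a₃ * vbar)) =
          ((N * a₀ - (1 + vbar) * (2 * a₁ + a₂ + a₃ * vbar) : ℝ) : ℂ) by push_cast; ring,
          hJ00]
        push_cast
        ring
      rw [this] at hdet0
      linear_combination hdet0
    have hμne : μ ≠ 0 := by
      intro h
      rw [h] at key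
      simp at key
      norm_cast at key
      linarith
    refine ⟨?_, hμne⟩
    have him : ((μ ^ 2).im) = 0 := by rw [key]; simp
    have hre : ((μ ^ 2).re) = -d := by rw [key]; simp
    simp [pow_two, Complex.mul_im, Complex.mul_re] at him hre
    rcases mul_eq_zero.mp (by linarith : μ.re * μ.im = 0) with h | h
    · exact h
    · exfalso; rw [h] at hre; nlinarith
end
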